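/- Let P(λ) = ∑_{k=0}^d λ^k P_k be an n×n matrix polynomial over a field F with even degree d = 2t (t ≥ 2), set Q(λ) := ∑_{k=0}^{d−1} λ^k P_k, and let λB+A be a pencil of size (t+1)n×(t+1)n with blocks M_{11}(λ) = −P_d, M_{12}(λ), M_{21}(λ), M_{22}(λ) (of sizes n×n, n×tn, tn×n, tn×tn) satisfying M_{12}(λ)(Λ_{t−1}(λ)⊗I_n) = λ^t P_d, (Λ_{t−1}(λ)^T⊗I_n)M_{21}(λ) = λ^t P_d, and (Λ_{t−1}(λ)^T⊗I_n)M_{22}(λ)(Λ_{t−1}(λ)⊗I_n) = Q(λ). Let L(λ) be the associated modified block Kronecker pencil with parameter σ ∈ {1,−1}. Then L(λ) · [Λ_t(λ)⊗I_n ; N̂_t(λ)(λB+A)(Λ_t(λ)⊗I_n)] = e_{t+1}⊗P(λ), i.e., the 2tn×n matrix polynomial obtained as this product has its (t+1)-th n×n block equal to P(λ) and all other blocks equal to 0 (e_{t+1} denotes the (t+1)-th column of I_{2t}). -/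

import Mathlib

open Polynomial Matrix
open scoped Kronecker

noncomputable section

/-- Entrywise inclusion of a constant matrix into polynomial matrices. -/
def matC {F : Type} [Field F] {m l : Type*} (M : Matrix m l F) : Matrix m l (Polynomial F) :=
  M.map fun a => (C a : Polynomial F)

/-- The pencil `λ ↦ A + λ B`, represented as a matrix over `F[λ]`. -/
def pencil {F : Type} [Field F] {m l : Type*} (A B : Matrix m l F) :
    Matrix m l (Polynomial F) :=
  matC A + (X : Polynomial F) • matC B

/-- Grade-`g` reversal `rev_g`, applied entrywise. -/
def revMat {F : Type} [Field F] {m l : Type*} (g : ℕ) (M : Matrix m l (Polynomial F)) :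
    Matrix m l (Polynomial F) :=
  M.map fun q => q.reflect g

/-- Entrywise evaluation of a polynomial matrix at a point. -/
def evalMat {F : Type} [Field F] {m l : Type*} (a : F) (M : Matrix m l (Polynomial F)) :
    Matrix m l F :=
  M.map fun q => q.eval a

/-- The matrix polynomial `P(λ) = ∑_{k=0}^d λ^k P_k` built from its coefficients. -/
def polyOfCoeffs {F : Type} [Field F] {n : ℕ} (d : ℕ) (Pc : ℕ → Matrix (Fin n) (Fin n) F) :
    Matrix (Fin n) (Fin n) (Polynomial F) :=
  ∑ k ∈ Finset.range (d + 1), (X : Polynomial F) ^ k • matC (Pc k)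

/-- The `(i,j)` block of a block-partitioned matrix. -/
def blk {α p q n m : Type*} (A : Matrix (p × n) (q × m) α) (i : p) (j : q) :
    Matrix n m α :=
  Matrix.of fun r c => A (i, r) (j, c)

/-- `Λ_s(λ) ⊗ I_n`, an `(s+1)n × n` polynomial matrix whose `i`-th block is `λ^{s-i} I_n`. -/
def Lam (F : Type) [Field F] (s n : ℕ) :
    Matrix (Fin (s+1) × Fin n) (Fin n) (Polynomial F) :=
  Matrix.of fun p c => if p.2 = c then (X : Polynomial F) ^ (s - (p.1 : ℕ)) else 0

/-- The pencil `L_s(λ) ∈ F[λ]^{s×(s+1)}` with `-1` on the diagonal and `λ` on the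
superdiagonal. -/
def Lpen (F : Type) [Field F] (s : ℕ) : Matrix (Fin s) (Fin (s+1)) (Polynomial F) :=
  Matrix.of fun i j =>
    if (j : ℕ) = (i : ℕ) then -1 else if (j : ℕ) = (i : ℕ) + 1 then X else 0

/-- The block Kronecker pencil `[[λB+A, L_s(λ)ᵀ⊗I_n],[σ L_s(λ)⊗I_n, 0]]` associated with a
pencil `M = λB+A` of size `(s+1)n × (s+1)n`. -/
def blockKron (F : Type) [Field F] (s n : ℕ) (σ : F)
    (M : Matrix (Fin (s+1) × Fin n) (Fin (s+1) × Fin n) (Polynomial F)) :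
    Matrix ((Fin (s+1) × Fin n) ⊕ (Fin s × Fin n)) ((Fin (s+1) × Fin n) ⊕ (Fin s × Fin n))
      (Polynomial F) :=
  Matrix.fromBlocks M (Lpen F s ⊗ₖ (1 : Matrix (Fin n) (Fin n) (Polynomial F)))ᵀ
    (σ • (Lpen F s ⊗ₖ (1 : Matrix (Fin n) (Fin n) (Polynomial F)))) 0

/-- `L` is a linearization of `P`: there are unimodular `U`, `V` with
`U L V = diag(I_m, P)` (up to the fixed identification of index sets). -/
def IsLinearization {F : Type} [Field F] (m : ℕ) {ι ρ : Type*} [Fintype ι] [DecidableEq ι]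
    [Fintype ρ] [DecidableEq ρ] (L : Matrix ι ι (Polynomial F))
    (P : Matrix ρ ρ (Polynomial F)) : Prop :=
  ∃ (e : (Fin m ⊕ ρ) ≃ ι) (U V : Matrix ι ι (Polynomial F)),
    IsUnit U.det ∧ IsUnit V.det ∧
      U * L * V =
        (Matrix.fromBlocks (1 : Matrix (Fin m) (Fin m) (Polynomial F)) 0 0 P).submatrix
          e.symm e.symm

/-- The block conditions `∑_{i+j=d+2-k} B_{ij} + ∑_{i+j=d+1-k} A_{ij} = P_k` for
`k = 0,…,d` (blocks are indexed here `0`-based, so `i+j` `1`-based is `i+j+2` `0`-based). -/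
def blockConds {F : Type} [Field F] {s n : ℕ} (d : ℕ) (Pc : ℕ → Matrix (Fin n) (Fin n) F)
    (A B : Matrix (Fin (s+1) × Fin n) (Fin (s+1) × Fin n) F) : Prop :=
  ∀ k, k ≤ d →
    (∑ p ∈ Finset.univ.filter
        (fun p : Fin (s+1) × Fin (s+1) => (p.1 : ℕ) + (p.2 : ℕ) + 2 + k = d + 2),
        blk B p.1 p.2) +
      (∑ p ∈ Finset.univ.filter
        (fun p : Fin (s+1) × Fin (s+1) => (p.1 : ℕ) + (p.2 : ℕ) + 2 + k = d + 1),
        blk A p.1 p.2) = Pc k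

/-- `L̂_t(λ) ⊗ I_n` (with `t = u+1`): first block column zero, remaining block columns
`L_{t-1}(λ) ⊗ I_n`; the column index is split as `Fin n ⊕ (Fin t × Fin n)`. -/
def LhatB (F : Type) [Field F] (u n : ℕ) :
    Matrix (Fin u × Fin n) (Fin n ⊕ Fin (u+1) × Fin n) (Polynomial F) :=
  Matrix.of fun p q =>
    match q with
    | Sum.inl _ => 0
    | Sum.inr c => (Lpen F u ⊗ₖ (1 : Matrix (Fin n) (Fin n) (Polynomial F))) p c

/-- The modified block Kronecker pencil `[[λB+A, L̂_t(λ)ᵀ⊗I_n],[σ L̂_t(λ)⊗I_n, 0]]`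
(with `t = u+1`). -/
def modBK (F : Type) [Field F] (u n : ℕ) (σ : F)
    (M : Matrix (Fin n ⊕ Fin (u+1) × Fin n) (Fin n ⊕ Fin (u+1) × Fin n) (Polynomial F)) :
    Matrix ((Fin n ⊕ Fin (u+1) × Fin n) ⊕ Fin u × Fin n)
      ((Fin n ⊕ Fin (u+1) × Fin n) ⊕ Fin u × Fin n) (Polynomial F) :=
  Matrix.fromBlocks M (LhatB F u n)ᵀ (σ • LhatB F u n) 0

/-- `Λ̂_t(λ) ⊗ I_n` (with `t = u+1`): the `(t+1)n × 2n` polynomial matrix whose transpose has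
block rows `(I_n, 0, …, 0)` and `(0, λ^{t-1}I_n, …, λ I_n, I_n)`. -/
def LamHatB (F : Type) [Field F] (u n : ℕ) :
    Matrix (Fin n ⊕ Fin (u+1) × Fin n) (Fin 2 × Fin n) (Polynomial F) :=
  Matrix.of fun q c =>
    match q with
    | Sum.inl r => if c.1 = 0 ∧ c.2 = r then 1 else 0
    | Sum.inr p => if c.1 = 1 ∧ c.2 = p.2 then (X : Polynomial F) ^ (u - (p.1 : ℕ)) else 0

/-- `Λ̃_t(λ) ⊗ I_n` (with `t = u+1`): the `(t+1)n × 2n` polynomial matrix whose transpose has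
block rows `(I_n, 0, …, 0)` and `(0, I_n, λ I_n, …, λ^{t-1} I_n)`. -/
def LamTildeB (F : Type) [Field F] (u n : ℕ) :
    Matrix (Fin n ⊕ Fin (u+1) × Fin n) (Fin 2 × Fin n) (Polynomial F) :=
  Matrix.of fun q c =>
    match q with
    | Sum.inl r => if c.1 = 0 ∧ c.2 = r then 1 else 0
    | Sum.inr p => if c.1 = 1 ∧ c.2 = p.2 then (X : Polynomial F) ^ (p.1 : ℕ) else 0

/-- A `2n × 2n` matrix assembled from four `n × n` blocks, indexed by `Fin 2 × Fin n`. -/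
def twoBlock {α : Type*} {n : ℕ} (W₁₁ W₁₂ W₂₁ W₂₂ : Matrix (Fin n) (Fin n) α) :
    Matrix (Fin 2 × Fin n) (Fin 2 × Fin n) α :=
  Matrix.of fun p q =>
    if p.1 = 0 then (if q.1 = 0 then W₁₁ p.2 q.2 else W₁₂ p.2 q.2)
    else (if q.1 = 0 then W₂₁ p.2 q.2 else W₂₂ p.2 q.2)

/-- `Λ_t(λ) ⊗ I_n` (with `t = u+1`), over the split row index `Fin n ⊕ (Fin t × Fin n)`:
block entries `λ^t I_n, λ^{t-1} I_n, …, λ I_n, I_n`. -/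
def LamFullB (F : Type) [Field F] (u n : ℕ) :
    Matrix (Fin n ⊕ Fin (u+1) × Fin n) (Fin n) (Polynomial F) :=
  Matrix.of fun q c =>
    match q with
    | Sum.inl r => if r = c then (X : Polynomial F) ^ (u + 1) else 0
    | Sum.inr p => if p.2 = c then (X : Polynomial F) ^ (u - (p.1 : ℕ)) else 0

/-- `N̂_t(λ) = Ĥ_t(λ) ⊗ I_n` (with `t = u+1`): `Ĥ_t ∈ F[λ]^{(t-1)×(t+1)}` has `(i,j)` entry
`λ^{i+1-j}` if `2 ≤ j ≤ i+1` and `0` otherwise. -/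
def NhatB (F : Type) [Field F] (u n : ℕ) :
    Matrix (Fin u × Fin n) (Fin n ⊕ Fin (u+1) × Fin n) (Polynomial F) :=
  Matrix.of fun p q =>
    match q with
    | Sum.inl _ => 0
    | Sum.inr c =>
        if (c.1 : ℕ) ≤ (p.1 : ℕ) ∧ p.2 = c.2 then
          (X : Polynomial F) ^ ((p.1 : ℕ) - (c.1 : ℕ)) else 0

end


noncomputable section AuxSect

def Hmat (F : Type) [Field F] (u : ℕ) : Matrix (Fin u) (Fin (u+1)) (Polynomial F) :=
  Matrix.of fun i j => if (j:ℕ) ≤ (i:ℕ) then (X:Polynomial F)^((i:ℕ)-(j:ℕ)) else 0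

def Emat (F : Type) [Field F] (u : ℕ) : Matrix (Fin (u+1)) (Fin (u+1)) (Polynomial F) :=
  Matrix.of fun j k => if (j:ℕ) = u then (X:Polynomial F)^(u-(k:ℕ)) else 0

lemma X_mul_pow {F : Type} [Field F] {b c : ℕ} (h : b + 1 = c) :
    (X:Polynomial F) * X^b = X^c := by rw [← pow_succ', h]

lemma key {F : Type} [Field F] {u : ℕ} (hu : 1 ≤ u) :
    (1 : Matrix (Fin (u+1)) (Fin (u+1)) (Polynomial F)) + (Lpen F u)ᵀ * Hmat F u = Emat F u := by
  apply Matrix.ext; intro j k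
  rw [Matrix.add_apply, Matrix.mul_apply]
  by_cases hj : (j:ℕ) = u
  · have step : ∀ i : Fin u, (Lpen F u)ᵀ j i * Hmat F u i k =
        if i = (⟨u-1, by omega⟩ : Fin u) then
          (if (k:ℕ) ≤ u-1 then (X:Polynomial F)^(u-(k:ℕ)) else 0) else 0 := by
      intro i
      simp only [transpose_apply, Lpen, Hmat, Matrix.of_apply]
      by_cases hi : i = (⟨u-1, by omega⟩ : Fin u)
      · have hiv : (i:ℕ) = u - 1 := by rw [hi]
        rw [if_neg (show ¬ (j:ℕ) = (i:ℕ) from by omega),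
            if_pos (show (j:ℕ) = (i:ℕ) + 1 from by omega), if_pos hi]
        by_cases hk : (k:ℕ) ≤ u-1
        · rw [if_pos (show (k:ℕ) ≤ (i:ℕ) from by omega), if_pos hk,
            X_mul_pow (show (i:ℕ)-(k:ℕ)+1 = u-(k:ℕ) from by omega)]
        · rw [if_neg (show ¬ (k:ℕ) ≤ (i:ℕ) from by omega), if_neg hk, mul_zero]
      · have hiv : (i:ℕ) ≠ u - 1 := fun h => hi (Fin.ext h)
        rw [if_neg (show ¬ (j:ℕ) = (i:ℕ) from by omega),
            if_neg (show ¬ (j:ℕ) = (i:ℕ) + 1 from by omega), zero_mul, if_neg hi]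
    rw [Finset.sum_congr rfl (fun i _ => step i), Finset.sum_ite_eq' Finset.univ,
      if_pos (Finset.mem_univ _)]
    simp only [Emat, Matrix.of_apply, if_pos hj, Matrix.one_apply]
    by_cases hk : (k:ℕ) ≤ u - 1
    · rw [if_pos hk, if_neg (show ¬ j = k from fun h => by
        have : (j:ℕ) = (k:ℕ) := congrArg Fin.val h; omega)]
      ring
    · rw [if_neg hk, if_pos (Fin.ext (show (j:ℕ) = (k:ℕ) from by omega)),
        show u - (k:ℕ) = 0 from by omega, pow_zero, add_zero]
  · have step : ∀ i : Fin u, (Lpen F u)ᵀ j i * Hmat F u i k =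
        (if i = (⟨(j:ℕ), by omega⟩ : Fin u) then
          -(if (k:ℕ) ≤ (j:ℕ) then (X:Polynomial F)^((j:ℕ)-(k:ℕ)) else 0) else 0) +
        (if (i:ℕ)+1 = (j:ℕ) then
          (if (k:ℕ) ≤ (j:ℕ)-1 then (X:Polynomial F)^((j:ℕ)-(k:ℕ)) else 0) else 0) := by
      intro i
      simp only [transpose_apply, Lpen, Hmat, Matrix.of_apply]
      by_cases hi1 : i = (⟨(j:ℕ), by omega⟩ : Fin u)
      · have hiv : (i:ℕ) = (j:ℕ) := by rw [hi1]
        rw [if_pos (show (j:ℕ) = (i:ℕ) from hiv.symm), if_pos hi1,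
          if_neg (show ¬ (i:ℕ)+1 = (j:ℕ) from by omega), add_zero, neg_one_mul, hiv]
      · have hiv : (i:ℕ) ≠ (j:ℕ) := fun h => hi1 (Fin.ext h)
        rw [if_neg (show ¬ (j:ℕ) = (i:ℕ) from fun h => hiv h.symm), if_neg hi1, zero_add]
        by_cases hi2 : (i:ℕ)+1 = (j:ℕ)
        · rw [if_pos (show (j:ℕ) = (i:ℕ)+1 from hi2.symm), if_pos hi2]
          by_cases hk : (k:ℕ) ≤ (j:ℕ)-1
          · rw [if_pos (show (k:ℕ) ≤ (i:ℕ) from by omega), if_pos hk,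
              X_mul_pow (show (i:ℕ)-(k:ℕ)+1 = (j:ℕ)-(k:ℕ) from by omega)]
          · rw [if_neg (show ¬ (k:ℕ) ≤ (i:ℕ) from by omega), if_neg hk, mul_zero]
        · rw [if_neg (show ¬ (j:ℕ) = (i:ℕ)+1 from fun h => hi2 h.symm), if_neg hi2, zero_mul]
    rw [Finset.sum_congr rfl (fun i _ => step i), Finset.sum_add_distrib,
      Finset.sum_ite_eq' Finset.univ, if_pos (Finset.mem_univ _)]
    simp only [Emat, Matrix.of_apply, if_neg hj, Matrix.one_apply]
    by_cases hj0 : (j:ℕ) = 0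
    · rw [Finset.sum_eq_zero (fun (i : Fin u) _ => if_neg (show ¬ (i:ℕ)+1 = (j:ℕ) from by omega))]
      by_cases hk : (k:ℕ) ≤ (j:ℕ)
      · rw [if_pos hk, if_pos (Fin.ext (show (j:ℕ) = (k:ℕ) from by omega)),
          show (j:ℕ)-(k:ℕ) = 0 from by omega, pow_zero]
        ring
      · rw [if_neg hk, if_neg (show ¬ j = k from fun h => hk (le_of_eq (congrArg Fin.val h).symm))]
        ring
    · have hrw : ∀ i : Fin u, (if (i:ℕ)+1 = (j:ℕ) then
          (if (k:ℕ) ≤ (j:ℕ)-1 then (X:Polynomial F)^((j:ℕ)-(k:ℕ)) else 0) else 0) =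
          (if i = (⟨(j:ℕ)-1, by omega⟩ : Fin u) then
          (if (k:ℕ) ≤ (j:ℕ)-1 then (X:Polynomial F)^((j:ℕ)-(k:ℕ)) else 0) else 0) := by
        intro i
        congr 1
        simp only [eq_iff_iff]
        constructor
        · intro h; exact Fin.ext (show (i:ℕ) = (j:ℕ)-1 from by omega)
        · intro h
          have : (i:ℕ) = (j:ℕ)-1 := by rw [h]
          omega
      rw [Finset.sum_congr rfl (fun i _ => hrw i), Finset.sum_ite_eq' Finset.univ,
        if_pos (Finset.mem_univ _)]
      by_cases hk : (k:ℕ) ≤ (j:ℕ)-1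
      · rw [if_pos hk, if_pos (show (k:ℕ) ≤ (j:ℕ) from by omega),
          if_neg (show ¬ j = k from fun h => by
            have : (j:ℕ) = (k:ℕ) := congrArg Fin.val h; omega)]
        ring
      · rw [if_neg hk]
        by_cases hk2 : (k:ℕ) ≤ (j:ℕ)
        · rw [if_pos hk2, if_pos (Fin.ext (show (j:ℕ) = (k:ℕ) from by omega)),
            show (j:ℕ)-(k:ℕ) = 0 from by omega, pow_zero]
          ring
        · rw [if_neg hk2, if_neg (show ¬ j = k from fun h => hk2 (le_of_eq (congrArg Fin.val h).symm))]
          ring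


lemma lhat_eq {F : Type} [Field F] (u n : ℕ) :
    LhatB F u n = Matrix.fromCols 0
      (Lpen F u ⊗ₖ (1 : Matrix (Fin n) (Fin n) (Polynomial F))) := by
  apply Matrix.ext; rintro p (c|c) <;> rfl

lemma nhat_eq {F : Type} [Field F] (u n : ℕ) :
    NhatB F u n = Matrix.fromCols 0
      (Hmat F u ⊗ₖ (1 : Matrix (Fin n) (Fin n) (Polynomial F))) := by
  apply Matrix.ext; rintro p (c|c)
  · rfl
  · show (if (c.1:ℕ) ≤ (p.1:ℕ) ∧ p.2 = c.2 then (X:Polynomial F)^((p.1:ℕ)-(c.1:ℕ)) else 0) =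
      (if (c.1:ℕ) ≤ (p.1:ℕ) then (X:Polynomial F)^((p.1:ℕ)-(c.1:ℕ)) else 0) *
        (if p.2 = c.2 then 1 else 0)
    by_cases h1 : (c.1:ℕ) ≤ (p.1:ℕ) <;> by_cases h2 : p.2 = c.2 <;>
      simp [h1, h2]

lemma lamfull_eq {F : Type} [Field F] (u n : ℕ) :
    LamFullB F u n = Matrix.fromRows
      ((X:Polynomial F)^(u+1) • (1 : Matrix (Fin n) (Fin n) (Polynomial F))) (Lam F u n) := by
  apply Matrix.ext; rintro (r|p) c
  · show (if r = c then (X:Polynomial F)^(u+1) else 0) = (X:Polynomial F)^(u+1) * (if r = c then 1 else 0)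
    by_cases h : r = c <;> simp [h]
  · rfl

lemma lpen_lam {F : Type} [Field F] (u n : ℕ) :
    (Lpen F u ⊗ₖ (1 : Matrix (Fin n) (Fin n) (Polynomial F))) * Lam F u n = 0 := by
  apply Matrix.ext; intro p c
  obtain ⟨i, r⟩ := p
  rw [Matrix.mul_apply, Matrix.zero_apply]
  have step : ∀ q : Fin (u+1) × Fin n,
      (Lpen F u ⊗ₖ (1 : Matrix (Fin n) (Fin n) (Polynomial F))) (i, r) q * Lam F u n q c =
      (if q = (i.castSucc, r) then -(if r = c then (X:Polynomial F)^(u-(i:ℕ)) else 0) else 0) +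
      (if q = (i.succ, r) then (if r = c then (X:Polynomial F)^(u-(i:ℕ)) else 0) else 0) := by
    rintro ⟨k, s⟩
    simp only [Matrix.kroneckerMap_apply, Lpen, Lam, Matrix.of_apply, Matrix.one_apply]
    by_cases hs : s = r
    · subst hs
      rw [if_pos rfl, mul_one]
      by_cases hk1 : k = i.castSucc
      · subst hk1
        rw [if_pos (show (↑(i.castSucc) : ℕ) = (i:ℕ) from Fin.coe_castSucc i), neg_one_mul,
          if_pos rfl,
          if_neg (show ¬ (i.castSucc, s) = (i.succ, s) from fun h => by
            have := congrArg (fun x : Fin (u+1) × Fin n => (x.1 : ℕ)) h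
            simp [Fin.coe_castSucc, Fin.val_succ] at this),
          add_zero, Fin.coe_castSucc]
      · by_cases hk2 : k = i.succ
        · subst hk2
          rw [if_neg (show ¬ (↑(i.succ) : ℕ) = (i:ℕ) from by simp [Fin.val_succ]),
            if_pos (show (↑(i.succ) : ℕ) = (i:ℕ) + 1 from Fin.val_succ i),
            if_neg (show ¬ (i.succ, s) = (i.castSucc, s) from fun h => by
              have := congrArg (fun x : Fin (u+1) × Fin n => (x.1 : ℕ)) h
              simp [Fin.coe_castSucc, Fin.val_succ] at this),
            if_pos rfl, zero_add, Fin.val_succ]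
          by_cases hc : s = c
          · rw [if_pos hc, if_pos hc,
              X_mul_pow (show u - ((i:ℕ)+1) + 1 = u - (i:ℕ) from by
                have := i.isLt; omega)]
          · rw [if_neg hc, if_neg hc, mul_zero]
        · have h1 : ¬ (k:ℕ) = (i:ℕ) := fun h => hk1 (Fin.ext (by simp [Fin.coe_castSucc, h]))
          have h2 : ¬ (k:ℕ) = (i:ℕ) + 1 := fun h => hk2 (Fin.ext (by simp [Fin.val_succ, h]))
          rw [if_neg h1, if_neg h2, zero_mul,
            if_neg (show ¬ (k, s) = (i.castSucc, s) from fun h => hk1 (congrArg Prod.fst h)),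
            if_neg (show ¬ (k, s) = (i.succ, s) from fun h => hk2 (congrArg Prod.fst h)), add_zero]
    · rw [if_neg (show ¬ r = s from fun h => hs h.symm), mul_zero, zero_mul,
        if_neg (show ¬ (k, s) = (i.castSucc, r) from fun h => hs (congrArg Prod.snd h)),
        if_neg (show ¬ (k, s) = (i.succ, r) from fun h => hs (congrArg Prod.snd h)), add_zero]
  rw [Finset.sum_congr rfl (fun q _ => step q), Finset.sum_add_distrib,
    Finset.sum_ite_eq' Finset.univ, Finset.sum_ite_eq' Finset.univ,
    if_pos (Finset.mem_univ _), if_pos (Finset.mem_univ _), neg_add_cancel]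

lemma emat_mul {F : Type} [Field F] (u n : ℕ)
    (W : Matrix (Fin (u+1) × Fin n) (Fin n) (Polynomial F)) :
    (Emat F u ⊗ₖ (1 : Matrix (Fin n) (Fin n) (Polynomial F))) * W =
      Matrix.of fun p c =>
        if (p.1 : ℕ) = u then ((Lam F u n)ᵀ * W) p.2 c else 0 := by
  apply Matrix.ext; intro p c
  obtain ⟨j, r⟩ := p
  rw [Matrix.mul_apply, Matrix.of_apply]
  by_cases hj : (j:ℕ) = u
  · rw [if_pos hj, Matrix.mul_apply]
    apply Finset.sum_congr rfl
    rintro ⟨k, s⟩ -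
    simp only [Matrix.kroneckerMap_apply, Emat, Lam, Matrix.of_apply, Matrix.one_apply,
      Matrix.transpose_apply, if_pos hj]
    by_cases hsr : r = s
    · rw [if_pos hsr, if_pos hsr.symm, mul_one]
    · rw [if_neg hsr, if_neg (fun h => hsr h.symm), mul_zero, zero_mul]
  · rw [if_neg hj]
    apply Finset.sum_eq_zero
    rintro ⟨k, s⟩ -
    simp only [Matrix.kroneckerMap_apply, Emat, Matrix.of_apply, if_neg hj, zero_mul]

lemma fromRows_add {F : Type} [Field F] {m₁ m₂ l : Type*}
    (A C : Matrix m₁ l (Polynomial F)) (B D : Matrix m₂ l (Polynomial F)) :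
    Matrix.fromRows A B + Matrix.fromRows C D = Matrix.fromRows (A + C) (B + D) := by
  apply Matrix.ext; rintro (i|i) j <;> rfl

lemma kron_one_transpose {F : Type} [Field F] {m l n : ℕ}
    (A : Matrix (Fin m) (Fin l) (Polynomial F)) :
    (A ⊗ₖ (1 : Matrix (Fin n) (Fin n) (Polynomial F)))ᵀ =
      Aᵀ ⊗ₖ (1 : Matrix (Fin n) (Fin n) (Polynomial F)) := by
  rw [← Matrix.kroneckerMap_transpose, Matrix.transpose_one]

end AuxSect

/-- (One-sided factorization, `t = u+1 ≥ 2`, `d = 2t`.) Under the block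
conditions of Corollary 5.13, the modified block Kronecker pencil satisfies
`L(λ)·[Λ_t(λ)⊗I_n ; N̂_t(λ)(λB+A)(Λ_t(λ)⊗I_n)] = e_{t+1} ⊗ P(λ)`. -/
theorem stmt_16 {F : Type} [Field F] (n u : ℕ) (hn : 0 < n) (hu : 1 ≤ u)
    (Pc : ℕ → Matrix (Fin n) (Fin n) F)
    (hdeg : Pc (2*(u+1)) ≠ 0)
    (σ : F) (hσ : σ = 1 ∨ σ = -1)
    (A B : Matrix (Fin n ⊕ Fin (u+1) × Fin n) (Fin n ⊕ Fin (u+1) × Fin n) F)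
    (h11 : (pencil A B).toBlocks₁₁ = -(matC (Pc (2*(u+1)))))
    (h12 : (pencil A B).toBlocks₁₂ * Lam F u n =
      (X : Polynomial F) ^ (u+1) • matC (Pc (2*(u+1))))
    (h21 : (Lam F u n)ᵀ * (pencil A B).toBlocks₂₁ =
      (X : Polynomial F) ^ (u+1) • matC (Pc (2*(u+1))))
    (h22 : (Lam F u n)ᵀ * (pencil A B).toBlocks₂₂ * Lam F u n =
      ∑ k ∈ Finset.range (2*(u+1)), (X : Polynomial F) ^ k • matC (Pc k)) :
    modBK F u n σ (pencil A B) *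
        Matrix.fromRows (LamFullB F u n) (NhatB F u n * pencil A B * LamFullB F u n) =
      Matrix.of fun q c =>
        match q with
        | Sum.inl (Sum.inr p) =>
            if p.1 = Fin.last u then polyOfCoeffs (2*(u+1)) Pc p.2 c else 0
        | Sum.inl (Sum.inl _) => 0
        | Sum.inr _ => 0 := by
  set M := pencil A B with hMdef
  have hM : M = Matrix.fromBlocks M.toBlocks₁₁ M.toBlocks₁₂ M.toBlocks₂₁ M.toBlocks₂₂ :=
    (Matrix.fromBlocks_toBlocks M).symm
  set W₂ : Matrix (Fin (u+1) × Fin n) (Fin n) (Polynomial F) :=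
    (X:Polynomial F)^(u+1) • M.toBlocks₂₁ + M.toBlocks₂₂ * Lam F u n with hW₂
  have hMW : M * LamFullB F u n = Matrix.fromRows 0 W₂ := by
    conv_lhs => rw [hM, lamfull_eq]
    rw [Matrix.fromBlocks_mul_fromRows, h11, Matrix.mul_smul, Matrix.mul_smul,
      Matrix.mul_one, Matrix.mul_one, h12, smul_neg, neg_add_cancel]
  have hLamW₂ : (Lam F u n)ᵀ * W₂ = polyOfCoeffs (2*(u+1)) Pc := by
    rw [hW₂, Matrix.mul_add, Matrix.mul_smul, h21, smul_smul, ← pow_add,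
      ← Matrix.mul_assoc, h22, polyOfCoeffs, Finset.sum_range_succ,
      show (u+1)+(u+1) = 2*(u+1) from by ring, add_comm]
  have hNW : NhatB F u n * M * LamFullB F u n =
      (Hmat F u ⊗ₖ (1 : Matrix (Fin n) (Fin n) (Polynomial F))) * W₂ := by
    rw [Matrix.mul_assoc, hMW, nhat_eq, Matrix.fromCols_mul_fromRows,
      Matrix.zero_mul, zero_add]
  have hbot : (σ • LhatB F u n) * LamFullB F u n = 0 := by
    rw [Matrix.smul_mul, lhat_eq, lamfull_eq, Matrix.fromCols_mul_fromRows,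
      Matrix.zero_mul, zero_add, lpen_lam, smul_zero]
  have htop : M * LamFullB F u n + (LhatB F u n)ᵀ * (NhatB F u n * M * LamFullB F u n) =
      Matrix.fromRows 0 (Matrix.of fun p c =>
        if (p.1 : ℕ) = u then polyOfCoeffs (2*(u+1)) Pc p.2 c else 0) := by
    rw [hNW, lhat_eq, Matrix.transpose_fromCols, Matrix.transpose_zero,
      Matrix.fromRows_mul, Matrix.zero_mul, hMW, fromRows_add, zero_add,
      kron_one_transpose, ← Matrix.mul_assoc, ← Matrix.mul_kronecker_mul,
      Matrix.one_mul]
    have : W₂ + ((Lpen F u)ᵀ * Hmat F u) ⊗ₖ (1 : Matrix (Fin n) (Fin n) (Polynomial F)) * W₂ =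
        (Emat F u ⊗ₖ (1 : Matrix (Fin n) (Fin n) (Polynomial F))) * W₂ := by
      rw [← key hu, Matrix.add_kronecker, Matrix.one_kronecker_one, Matrix.add_mul,
        Matrix.one_mul]
    rw [this, emat_mul, hLamW₂]
  show modBK F u n σ M * Matrix.fromRows (LamFullB F u n) (NhatB F u n * M * LamFullB F u n) = _
  rw [modBK, Matrix.fromBlocks_mul_fromRows, htop, hbot, Matrix.zero_mul, add_zero]
  apply Matrix.ext
  rintro ((r|p)|p) c
  · rfl
  · show (if (p.1 : ℕ) = u then polyOfCoeffs (2*(u+1)) Pc p.2 c else 0) =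
      (if p.1 = Fin.last u then polyOfCoeffs (2*(u+1)) Pc p.2 c else 0)
    congr 1
    simp [Fin.ext_iff, Fin.val_last, eq_iff_iff]
  · rfl
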